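/- If a positive semidefinite n×n matrix K̃ satisfies the algebraic Riccati equation K̃ = π(E[N₁ + A₁ᵀ K̃ A₁]), then the Riccati iteration K_0 = O, K_{t+1} = π(E[N₁ + A₁ᵀ K_t A₁]) satisfies K_t ≤ K̃ in the Loewner order for every t ≥ 0. -/

import Mathlib

open MeasureTheory Matrix Filter ProbabilityTheory
open scoped ENNReal NNReal

noncomputable section

instance matrixMeasurableSpace {I J : Type*} : MeasurableSpace (Matrix I J ℝ) :=
  inferInstanceAs (MeasurableSpace (I → J → ℝ))

/-- The Schur-complement map `π(P) = P_xx − P_xu P_uu⁻¹ P_ux`. -/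
def piMap {n m : ℕ} (P : Matrix (Fin n ⊕ Fin m) (Fin n ⊕ Fin m) ℝ) :
    Matrix (Fin n) (Fin n) ℝ :=
  P.toBlocks₁₁ - P.toBlocks₁₂ * P.toBlocks₂₂⁻¹ * P.toBlocks₂₁

/-- The feedback-gain map `Γ(P) = −P_uu⁻¹ P_ux`. -/
def gammaMap {n m : ℕ} (P : Matrix (Fin n ⊕ Fin m) (Fin n ⊕ Fin m) ℝ) :
    Matrix (Fin m) (Fin n) ℝ :=
  -(P.toBlocks₂₂⁻¹ * P.toBlocks₂₁)

/-- Loewner order: `X ≤ Y` iff `Y - X` is positive semidefinite. -/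
def loewnerLE {I : Type*} [Fintype I] (X Y : Matrix I I ℝ) : Prop :=
  (Y - X).PosSemidef

/-- Spectral norm (`2`-norm) of a real matrix. -/
def specNorm {I J : Type*} [Fintype I] [Fintype J] [DecidableEq J]
    (M : Matrix I J ℝ) : ℝ :=
  ‖LinearMap.toContinuousLinearMap (Matrix.toEuclideanLin M)‖

/-- Entrywise expectation of a random matrix. -/
def matExp {Ω : Type*} [MeasurableSpace Ω] (μpr : Measure Ω) {I J : Type*}
    (M : Ω → Matrix I J ℝ) : Matrix I J ℝ :=
  Matrix.of fun i j => ∫ ω, M ω i j ∂μpr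

section LQ

variable {n m : ℕ} {Ω : Type*} [MeasurableSpace Ω]

/-- The filtration `𝓕_t = σ(A_s, N_s : 1 ≤ s ≤ t)` (with `𝓕_0` trivial). -/
def lqFiltration (A : ℕ → Ω → Matrix (Fin n) (Fin n ⊕ Fin m) ℝ)
    (N : ℕ → Ω → Matrix (Fin n ⊕ Fin m) (Fin n ⊕ Fin m) ℝ) :
    ℕ → MeasurableSpace Ω := fun t =>
  ⨆ s ∈ Finset.Icc 1 t, MeasurableSpace.comap (fun ω => (A s ω, N s ω)) inferInstance

/-- A control is admissible if it is adapted to the filtration. -/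
def Admissible {k : ℕ} (F : ℕ → MeasurableSpace Ω) (u : ℕ → Ω → Fin k → ℝ) : Prop :=
  ∀ t, @Measurable Ω (Fin k → ℝ) (F t) _ (u t)

/-- The state process `x_0 = x`, `x_{t+1} = A_{t+1} [x_t; u_t]`. -/
def statePath (A : ℕ → Ω → Matrix (Fin n) (Fin n ⊕ Fin m) ℝ)
    (x : Fin n → ℝ) (u : ℕ → Ω → Fin m → ℝ) : ℕ → Ω → Fin n → ℝ
  | 0 => fun _ => x
  | t + 1 => fun ω => A (t + 1) ω *ᵥ Sum.elim (statePath A x u t ω) (u t ω)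

/-- The stage cost `[x_tᵀ, u_tᵀ] N_{t+1} [x_t; u_t]`. -/
def stageCost (A : ℕ → Ω → Matrix (Fin n) (Fin n ⊕ Fin m) ℝ)
    (N : ℕ → Ω → Matrix (Fin n ⊕ Fin m) (Fin n ⊕ Fin m) ℝ)
    (x : Fin n → ℝ) (u : ℕ → Ω → Fin m → ℝ) (t : ℕ) (ω : Ω) : ℝ :=
  Sum.elim (statePath A x u t ω) (u t ω) ⬝ᵥ
    (N (t + 1) ω *ᵥ Sum.elim (statePath A x u t ω) (u t ω))

/-- The total cost `J(x, u) ∈ [0,∞]`. -/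
def costJ (A : ℕ → Ω → Matrix (Fin n) (Fin n ⊕ Fin m) ℝ)
    (N : ℕ → Ω → Matrix (Fin n ⊕ Fin m) (Fin n ⊕ Fin m) ℝ)
    (x : Fin n → ℝ) (u : ℕ → Ω → Fin m → ℝ) (ω : Ω) : ℝ≥0∞ :=
  ∑' t, ENNReal.ofReal (stageCost A N x u t ω)

/-- The value function `V(x) = inf over admissible u of E[J(x,u)]`. -/
def valueV (μpr : Measure Ω) (A : ℕ → Ω → Matrix (Fin n) (Fin n ⊕ Fin m) ℝ)
    (N : ℕ → Ω → Matrix (Fin n ⊕ Fin m) (Fin n ⊕ Fin m) ℝ)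
    (x : Fin n → ℝ) : ℝ≥0∞ :=
  ⨅ (u : ℕ → Ω → Fin m → ℝ) (_ : Admissible (lqFiltration A N) u),
    ∫⁻ ω, costJ A N x u ω ∂μpr

/-- The Riccati iteration `K_0 = O`, `K_{t+1} = π(E[N₁ + A₁ᵀ K_t A₁])`. -/
def Kseq (μpr : Measure Ω) (A : ℕ → Ω → Matrix (Fin n) (Fin n ⊕ Fin m) ℝ)
    (N : ℕ → Ω → Matrix (Fin n ⊕ Fin m) (Fin n ⊕ Fin m) ℝ) :
    ℕ → Matrix (Fin n) (Fin n) ℝ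
  | 0 => 0
  | t + 1 => piMap (matExp μpr (fun ω => N 1 ω + (A 1 ω)ᵀ * Kseq μpr A N t * A 1 ω))

/-- The Q-learning process of Algorithm 1. -/
def Qproc (A : ℕ → Ω → Matrix (Fin n) (Fin n ⊕ Fin m) ℝ)
    (N : ℕ → Ω → Matrix (Fin n ⊕ Fin m) (Fin n ⊕ Fin m) ℝ)
    (α : ℕ → Ω → ℝ) (Q0 : Matrix (Fin n ⊕ Fin m) (Fin n ⊕ Fin m) ℝ) :
    ℕ → Ω → Matrix (Fin n ⊕ Fin m) (Fin n ⊕ Fin m) ℝ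
  | 0 => fun _ => Q0
  | t + 1 => fun ω =>
      Qproc A N α Q0 t ω + α t ω •
        (N (t + 1) ω + (A (t + 1) ω)ᵀ * piMap (Qproc A N α Q0 t ω) * A (t + 1) ω
          - Qproc A N α Q0 t ω)

end LQ


section AuxLemmas

open MeasureTheory Matrix

lemma matrix_conjTranspose_real {I J : Type*} (M : Matrix I J ℝ) : Mᴴ = Mᵀ := by
  ext i j; simp [Matrix.conjTranspose_apply]

lemma euclid_abs_le_norm {I : Type*} [Fintype I] (x : EuclideanSpace ℝ I) (i : I) :
    |x i| ≤ ‖x‖ := by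
  rw [EuclideanSpace.norm_eq]
  have h : |x i| = Real.sqrt (‖x i‖ ^ 2) := by
    simp [Real.sqrt_sq_eq_abs, Real.norm_eq_abs, abs_abs]
  rw [h]
  exact Real.sqrt_le_sqrt (Finset.single_le_sum (f := fun k => ‖x k‖ ^ 2)
    (fun k _ => sq_nonneg _) (Finset.mem_univ i))

set_option maxHeartbeats 800000 in
lemma abs_entry_le_specNorm {I : Type*} [Fintype I] [DecidableEq I]
    (M : Matrix I I ℝ) (i j : I) : |M i j| ≤ specNorm M := by
  set L := LinearMap.toContinuousLinearMap (Matrix.toEuclideanLin M) with hL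
  have h2 : (L (EuclideanSpace.single j (1:ℝ))) i = M i j := by
    show (Matrix.toEuclideanLin M (EuclideanSpace.single j (1:ℝ))) i = M i j
    rw [Matrix.toEuclideanLin_apply]
    show (M *ᵥ (WithLp.equiv 2 (I → ℝ)) (EuclideanSpace.single j (1:ℝ))) i = M i j
    have h3 : (WithLp.equiv 2 (I → ℝ)) (EuclideanSpace.single j (1:ℝ)) = Pi.single j 1 := rfl
    rw [h3, Matrix.mulVec_single]
    simp
  have hno : ‖EuclideanSpace.single j (1:ℝ)‖ = 1 := by
    rw [EuclideanSpace.norm_single]; norm_num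
  calc |M i j| = |(L (EuclideanSpace.single j (1:ℝ))) i| := by rw [h2]
    _ ≤ ‖L (EuclideanSpace.single j (1:ℝ))‖ := euclid_abs_le_norm _ i
    _ ≤ ‖L‖ * ‖EuclideanSpace.single j (1:ℝ)‖ := L.le_opNorm _
    _ = specNorm M := by rw [hno, mul_one]; rfl

variable {n m : ℕ}

/-- The auxiliary quadratic cost matrix `[I Gᵀ] P [I; G]`. -/
def Jm (P : Matrix (Fin n ⊕ Fin m) (Fin n ⊕ Fin m) ℝ) (G : Matrix (Fin m) (Fin n) ℝ) :
    Matrix (Fin n) (Fin n) ℝ :=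
  P.toBlocks₁₁ + P.toBlocks₁₂ * G + Gᵀ * P.toBlocks₂₁ + Gᵀ * P.toBlocks₂₂ * G

lemma Jm_sub (P Q : Matrix (Fin n ⊕ Fin m) (Fin n ⊕ Fin m) ℝ) (G : Matrix (Fin m) (Fin n) ℝ) :
    Jm (Q - P) G = Jm Q G - Jm P G := by
  have h11 : (Q - P).toBlocks₁₁ = Q.toBlocks₁₁ - P.toBlocks₁₁ := rfl
  have h12 : (Q - P).toBlocks₁₂ = Q.toBlocks₁₂ - P.toBlocks₁₂ := rfl
  have h21 : (Q - P).toBlocks₂₁ = Q.toBlocks₂₁ - P.toBlocks₂₁ := rfl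
  have h22 : (Q - P).toBlocks₂₂ = Q.toBlocks₂₂ - P.toBlocks₂₂ := rfl
  simp only [Jm, h11, h12, h21, h22, Matrix.sub_mul, Matrix.mul_sub]
  abel

lemma Jm_psd {P : Matrix (Fin n ⊕ Fin m) (Fin n ⊕ Fin m) ℝ} (h : P.PosSemidef)
    (G : Matrix (Fin m) (Fin n) ℝ) : (Jm P G).PosSemidef := by
  have h2 := (h.conjTranspose_mul_mul_same (Matrix.fromBlocks 1 0 G 0)).submatrix
    (Sum.inl : Fin n → Fin n ⊕ Fin m)
  have key : Jm P G =
      (((Matrix.fromBlocks 1 0 G 0)ᴴ * P * Matrix.fromBlocks 1 0 G 0)).submatrix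
        (Sum.inl : Fin n → Fin n ⊕ Fin m) (Sum.inl : Fin n → Fin n ⊕ Fin m) := by
    have hP4 : P = Matrix.fromBlocks P.toBlocks₁₁ P.toBlocks₁₂ P.toBlocks₂₁ P.toBlocks₂₂ :=
      (Matrix.fromBlocks_toBlocks P).symm
    have heq : (((Matrix.fromBlocks 1 0 G 0)ᴴ * P * Matrix.fromBlocks 1 0 G 0)).submatrix
        (Sum.inl : Fin n → Fin n ⊕ Fin m) (Sum.inl : Fin n → Fin n ⊕ Fin m)
        = (((Matrix.fromBlocks 1 0 G 0)ᴴ * P * Matrix.fromBlocks 1 0 G 0)).toBlocks₁₁ := rfl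
    rw [heq, matrix_conjTranspose_real, Matrix.fromBlocks_transpose]
    conv_lhs => rw [hP4]
    conv_rhs => rw [hP4]
    rw [Matrix.fromBlocks_multiply, Matrix.fromBlocks_multiply, Matrix.toBlocks_fromBlocks₁₁]
    simp only [Jm, Matrix.toBlocks_fromBlocks₁₁, Matrix.toBlocks_fromBlocks₁₂,
      Matrix.toBlocks_fromBlocks₂₁, Matrix.toBlocks_fromBlocks₂₂, Matrix.one_mul,
      Matrix.mul_one, Matrix.zero_mul, Matrix.mul_zero, Matrix.add_mul, add_zero, zero_add,
      transpose_one, transpose_zero]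
    abel
  rw [key]; exact h2

lemma Jm_sub_piMap {P : Matrix (Fin n ⊕ Fin m) (Fin n ⊕ Fin m) ℝ} (hherm : P.IsHermitian)
    (hB : P.toBlocks₂₂.PosDef) (G : Matrix (Fin m) (Fin n) ℝ) :
    Jm P G - piMap P = (G - gammaMap P)ᵀ * P.toBlocks₂₂ * (G - gammaMap P) := by
  set B := P.toBlocks₂₂ with hBdef
  set C := P.toBlocks₂₁ with hCdef
  have hdet : IsUnit B.det := isUnit_iff_ne_zero.mpr hB.det_pos.ne'
  have hBt : Bᵀ = B := by
    rw [← matrix_conjTranspose_real]; exact hB.isHermitian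
  have hBit : (B⁻¹)ᵀ = B⁻¹ := by rw [Matrix.transpose_nonsing_inv, hBt]
  have hCt : Cᵀ = P.toBlocks₁₂ := by
    have h := hherm
    ext i j
    have := congrFun (congrFun h.eq (Sum.inl i)) (Sum.inr j)
    simpa [Matrix.conjTranspose_apply, hCdef, Matrix.toBlocks₂₁, Matrix.toBlocks₁₂] using this
  have expand : (G - gammaMap P)ᵀ * B * (G - gammaMap P)
      = Gᵀ * B * G + Gᵀ * C + Cᵀ * G + Cᵀ * (B⁻¹ * C) := by
    rw [gammaMap, ← hBdef, ← hCdef, sub_neg_eq_add, Matrix.transpose_add, Matrix.transpose_mul,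
      hBit]
    simp only [Matrix.add_mul, Matrix.mul_add]
    have e1 : Gᵀ * B * (B⁻¹ * C) = Gᵀ * C := by
      rw [Matrix.mul_assoc Gᵀ B, Matrix.mul_nonsing_inv_cancel_left _ _ hdet]
    have e2 : Cᵀ * B⁻¹ * B * G = Cᵀ * G := by
      rw [Matrix.mul_assoc Cᵀ B⁻¹, Matrix.nonsing_inv_mul _ hdet, Matrix.mul_one]
    have e3 : Cᵀ * B⁻¹ * B * (B⁻¹ * C) = Cᵀ * (B⁻¹ * C) := by
      rw [Matrix.mul_assoc Cᵀ B⁻¹, Matrix.nonsing_inv_mul _ hdet, Matrix.mul_one]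
    rw [e1, e2, e3]; abel
  rw [expand, piMap, ← hBdef, ← hCdef, ← hCt]
  have hassoc : Cᵀ * B⁻¹ * C = Cᵀ * (B⁻¹ * C) := by rw [Matrix.mul_assoc]
  rw [hassoc]
  simp only [Jm, ← hBdef, ← hCdef, ← hCt]
  abel

lemma piMap_eq_Jm_gamma {P : Matrix (Fin n ⊕ Fin m) (Fin n ⊕ Fin m) ℝ} (hherm : P.IsHermitian)
    (hB : P.toBlocks₂₂.PosDef) : Jm P (gammaMap P) = piMap P := by
  have h := Jm_sub_piMap hherm hB (gammaMap P)
  rw [sub_self] at h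
  simp only [Matrix.zero_mul, Matrix.mul_zero, transpose_zero] at h
  exact sub_eq_zero.mp h

lemma piMap_mono {P Q : Matrix (Fin n ⊕ Fin m) (Fin n ⊕ Fin m) ℝ}
    (hP : P.IsHermitian) (hQ : Q.IsHermitian)
    (hPB : P.toBlocks₂₂.PosDef) (hQB : Q.toBlocks₂₂.PosDef)
    (hle : (Q - P).PosSemidef) : (piMap Q - piMap P).PosSemidef := by
  set G := gammaMap Q with hG
  have h1 : Jm Q G = piMap Q := piMap_eq_Jm_gamma hQ hQB
  have h2 : (Jm Q G - Jm P G).PosSemidef := by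
    rw [← Jm_sub]; exact Jm_psd hle G
  have h3 : (Jm P G - piMap P).PosSemidef := by
    rw [Jm_sub_piMap hP hPB G]
    have := hPB.posSemidef.conjTranspose_mul_mul_same (G - gammaMap P)
    rwa [matrix_conjTranspose_real] at this
  have h4 : piMap Q - piMap P = (Jm Q G - Jm P G) + (Jm P G - piMap P) := by
    rw [h1]; abel
  rw [h4]; exact h2.add h3

lemma posDef_toBlocks₂₂ {P : Matrix (Fin n ⊕ Fin m) (Fin n ⊕ Fin m) ℝ}
    (h : P.PosDef) : P.toBlocks₂₂.PosDef := by
  refine Matrix.PosDef.of_dotProduct_mulVec_pos (h.posSemidef.submatrix (Sum.inr : Fin m → Fin n ⊕ Fin m)).1 fun x hx => ?_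
  have hy : Sum.elim (0 : Fin n → ℝ) x ≠ 0 := by
    intro hcon
    apply hx
    ext i
    simpa using congrFun hcon (Sum.inr i)
  have h2 := h.dotProduct_mulVec_pos hy
  have key : Sum.elim (0 : Fin n → ℝ) x ⬝ᵥ (P *ᵥ Sum.elim (0 : Fin n → ℝ) x)
      = x ⬝ᵥ (P.toBlocks₂₂ *ᵥ x) := by
    conv_lhs => rw [← Matrix.fromBlocks_toBlocks P]
    rw [Matrix.fromBlocks_mulVec]
    simp [sumElim_dotProduct_sumElim]
  rw [show star (Sum.elim (0 : Fin n → ℝ) x) = Sum.elim (0 : Fin n → ℝ) x by simp, key] at h2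
  simpa using h2

section MatExpLemmas

variable {Ω : Type*} [MeasurableSpace Ω] (μ : Measure Ω)

lemma matExp_add' {I J : Type*} (f g : Ω → Matrix I J ℝ)
    (hf : ∀ i j, Integrable (fun ω => f ω i j) μ)
    (hg : ∀ i j, Integrable (fun ω => g ω i j) μ) :
    matExp μ (fun ω => f ω + g ω) = matExp μ f + matExp μ g := by
  ext i j
  simp only [matExp, Matrix.of_apply, Matrix.add_apply]
  exact integral_add (hf i j) (hg i j)

lemma matExp_sub' {I J : Type*} (f g : Ω → Matrix I J ℝ)
    (hf : ∀ i j, Integrable (fun ω => f ω i j) μ)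
    (hg : ∀ i j, Integrable (fun ω => g ω i j) μ) :
    matExp μ (fun ω => f ω - g ω) = matExp μ f - matExp μ g := by
  ext i j
  simp only [matExp, Matrix.of_apply, Matrix.sub_apply]
  exact integral_sub (hf i j) (hg i j)

lemma dotProduct_matExp {I : Type*} [Fintype I] (M : Ω → Matrix I I ℝ)
    (hint : ∀ i j, Integrable (fun ω => M ω i j) μ) (x : I → ℝ) :
    x ⬝ᵥ (matExp μ M *ᵥ x) = ∫ ω, x ⬝ᵥ (M ω *ᵥ x) ∂μ := by
  have h1 : ∀ i, Integrable (fun ω => ∑ j, M ω i j * x j) μ := fun i =>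
    integrable_finset_sum _ (fun j _ => (hint i j).mul_const _)
  symm
  calc ∫ ω, x ⬝ᵥ (M ω *ᵥ x) ∂μ
      = ∑ i, ∫ ω, x i * (∑ j, M ω i j * x j) ∂μ := by
        rw [show (fun ω => x ⬝ᵥ (M ω *ᵥ x)) = fun ω => ∑ i, x i * (∑ j, M ω i j * x j) from rfl]
        exact integral_finset_sum _ (fun i _ => (h1 i).const_mul (x i))
    _ = ∑ i, x i * ∑ j, (∫ ω, M ω i j ∂μ) * x j := by
        refine Finset.sum_congr rfl fun i _ => ?_
        rw [integral_const_mul (x i) _, integral_finset_sum _ (fun j _ => (hint i j).mul_const (x j))]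
        congr 1
        exact Finset.sum_congr rfl fun j _ => integral_mul_const (x j) _
    _ = x ⬝ᵥ (matExp μ M *ᵥ x) := rfl

lemma matExp_posSemidef {I : Type*} [Fintype I] (M : Ω → Matrix I I ℝ)
    (hint : ∀ i j, Integrable (fun ω => M ω i j) μ)
    (h : ∀ ω, (M ω).PosSemidef) : (matExp μ M).PosSemidef := by
  refine Matrix.PosSemidef.of_dotProduct_mulVec_nonneg ?_ ?_
  · show (matExp μ M)ᴴ = matExp μ M
    ext i j
    simp only [Matrix.conjTranspose_apply, matExp, Matrix.of_apply, star_trivial]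
    rw [show (fun ω => M ω j i) = fun ω => M ω i j from funext fun ω => by
      conv_lhs => rw [← (h ω).1]
      simp [Matrix.conjTranspose_apply]]
  · intro x
    rw [show star x = x by simp, dotProduct_matExp μ M hint x]
    exact integral_nonneg fun ω => by simpa using (h ω).dotProduct_mulVec_nonneg x

end MatExpLemmas

end AuxLemmas

/-- Any psd solution of the ARE dominates the Riccati iteration. -/
theorem Kseq_le_of_ARE_solution
    {n m : ℕ} {Ω : Type*} [MeasurableSpace Ω]
    (μpr : Measure Ω) [IsProbabilityMeasure μpr]
    (A : ℕ → Ω → Matrix (Fin n) (Fin n ⊕ Fin m) ℝ)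
    (N : ℕ → Ω → Matrix (Fin n ⊕ Fin m) (Fin n ⊕ Fin m) ℝ)
    (hmeas : ∀ t : ℕ, Measurable fun ω => (A (t + 1) ω, N (t + 1) ω))
    (hindep : ProbabilityTheory.iIndepFun
      (fun (t : ℕ) (ω : Ω) => (A (t + 1) ω, N (t + 1) ω)) μpr)
    (hident : ∀ t : ℕ, ProbabilityTheory.IdentDistrib
      (fun ω => (A (t + 1) ω, N (t + 1) ω)) (fun ω => (A 1 ω, N 1 ω)) μpr μpr)
    (hNpsd : ∀ (t : ℕ) (ω : Ω), (N (t + 1) ω).PosSemidef)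
    (hmom : Integrable
      (fun ω => specNorm (N 1 ω) ^ 2 + specNorm ((A 1 ω)ᵀ * A 1 ω) ^ 2) μpr)
    (hENpos : (matExp μpr (N 1)).PosDef)
    (Ktil : Matrix (Fin n) (Fin n) ℝ) (hKtil : Ktil.PosSemidef)
    (hsol : Ktil = piMap (matExp μpr (fun ω => N 1 ω + (A 1 ω)ᵀ * Ktil * A 1 ω))) :
    ∀ t : ℕ, loewnerLE (Kseq μpr A N t) Ktil := by
  have mA : Measurable fun ω => A 1 ω := measurable_fst.comp (hmeas 0)
  have mN : Measurable fun ω => N 1 ω := measurable_snd.comp (hmeas 0)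
  set g : Ω → ℝ := fun ω =>
    1 + (specNorm (N 1 ω) ^ 2 + specNorm ((A 1 ω)ᵀ * A 1 ω) ^ 2) with hgdef
  have hgint : Integrable g μpr := (integrable_const 1).add hmom
  have hgbN : ∀ ω, specNorm (N 1 ω) ≤ g ω := fun ω => by
    have h2 : (0:ℝ) ≤ specNorm ((A 1 ω)ᵀ * A 1 ω) ^ 2 := sq_nonneg _
    have h1 : specNorm (N 1 ω) ≤ 1 + specNorm (N 1 ω) ^ 2 := by
      nlinarith [sq_nonneg (specNorm (N 1 ω) - 1)]
    simp only [hgdef]; linarith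
  have hgbA : ∀ ω, specNorm ((A 1 ω)ᵀ * A 1 ω) ≤ g ω := fun ω => by
    have h2 : (0:ℝ) ≤ specNorm (N 1 ω) ^ 2 := sq_nonneg _
    have h1 : specNorm ((A 1 ω)ᵀ * A 1 ω) ≤ 1 + specNorm ((A 1 ω)ᵀ * A 1 ω) ^ 2 := by
      nlinarith [sq_nonneg (specNorm ((A 1 ω)ᵀ * A 1 ω) - 1)]
    simp only [hgdef]; linarith
  have hNint : ∀ i j, Integrable (fun ω => N 1 ω i j) μpr := by
    intro i j
    refine Integrable.mono' hgint
      (((measurable_pi_apply j).comp ((measurable_pi_apply i).comp mN)).aestronglyMeasurable)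
      (ae_of_all _ fun ω => ?_)
    calc ‖N 1 ω i j‖ = |N 1 ω i j| := Real.norm_eq_abs _
      _ ≤ specNorm (N 1 ω) := abs_entry_le_specNorm _ i j
      _ ≤ g ω := hgbN ω
  have hentA : ∀ (k : Fin n) (i : Fin n ⊕ Fin m) ω, (A 1 ω k i) ^ 2 ≤ g ω := by
    intro k i ω
    have h1 : (A 1 ω k i) ^ 2 ≤ ((A 1 ω)ᵀ * A 1 ω) i i := by
      rw [Matrix.mul_apply, sq]
      exact Finset.single_le_sum (f := fun l => (A 1 ω)ᵀ i l * A 1 ω l i)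
        (fun l _ => mul_self_nonneg (A 1 ω l i)) (Finset.mem_univ k)
    calc (A 1 ω k i) ^ 2 ≤ ((A 1 ω)ᵀ * A 1 ω) i i := h1
      _ ≤ |((A 1 ω)ᵀ * A 1 ω) i i| := le_abs_self _
      _ ≤ specNorm ((A 1 ω)ᵀ * A 1 ω) := abs_entry_le_specNorm _ i i
      _ ≤ g ω := hgbA ω
  have hgnn : ∀ ω, 0 ≤ g ω := fun ω => by
    simp only [hgdef]; positivity
  have hAKAint : ∀ (K : Matrix (Fin n) (Fin n) ℝ) (i j : Fin n ⊕ Fin m),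
      Integrable (fun ω => ((A 1 ω)ᵀ * K * A 1 ω) i j) μpr := by
    intro K i j
    have hexp : ∀ ω, ((A 1 ω)ᵀ * K * A 1 ω) i j
        = ∑ l, (∑ k, A 1 ω k i * K k l) * A 1 ω l j := by
      intro ω
      simp [Matrix.mul_apply]
    have hmeasE : Measurable fun ω => ((A 1 ω)ᵀ * K * A 1 ω) i j := by
      rw [show (fun ω => ((A 1 ω)ᵀ * K * A 1 ω) i j)
          = fun ω => ∑ l, (∑ k, A 1 ω k i * K k l) * A 1 ω l j from funext hexp]
      exact Finset.measurable_sum _ fun l _ =>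
        (Finset.measurable_sum _ fun k _ =>
          (((measurable_pi_apply i).comp ((measurable_pi_apply k).comp mA)).mul_const _)).mul
          ((measurable_pi_apply j).comp ((measurable_pi_apply l).comp mA))
    set C : ℝ := ∑ k : Fin n, ∑ l : Fin n, |K k l| with hCdef
    refine Integrable.mono' (hgint.const_mul C) hmeasE.aestronglyMeasurable
      (ae_of_all _ fun ω => ?_)
    rw [Real.norm_eq_abs, hexp ω]
    have habs : ∀ (k l : Fin n), |A 1 ω k i * K k l * A 1 ω l j| ≤ |K k l| * g ω := by
      intro k l
      have hab : |A 1 ω k i * A 1 ω l j| ≤ g ω := by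
        rw [abs_mul]
        nlinarith [hentA k i ω, hentA l j ω, sq_nonneg (|A 1 ω k i| - |A 1 ω l j|),
          sq_abs (A 1 ω k i), sq_abs (A 1 ω l j), abs_nonneg (A 1 ω k i), abs_nonneg (A 1 ω l j)]
      calc |A 1 ω k i * K k l * A 1 ω l j| = |K k l| * |A 1 ω k i * A 1 ω l j| := by
            rw [show A 1 ω k i * K k l * A 1 ω l j
              = K k l * (A 1 ω k i * A 1 ω l j) by ring, abs_mul]
        _ ≤ |K k l| * g ω := mul_le_mul_of_nonneg_left hab (abs_nonneg _)
    calc |∑ l, (∑ k, A 1 ω k i * K k l) * A 1 ω l j|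
        = |∑ l, ∑ k, A 1 ω k i * K k l * A 1 ω l j| := by
          congr 1
          exact Finset.sum_congr rfl fun l _ => by rw [Finset.sum_mul]
      _ ≤ ∑ l, ∑ k, |A 1 ω k i * K k l * A 1 ω l j| := by
          refine (Finset.abs_sum_le_sum_abs _ _).trans ?_
          exact Finset.sum_le_sum fun l _ => Finset.abs_sum_le_sum_abs _ _
      _ ≤ ∑ l : Fin n, ∑ k : Fin n, |K k l| * g ω := by
          exact Finset.sum_le_sum fun l _ => Finset.sum_le_sum fun k _ => habs k l
      _ = (∑ l : Fin n, ∑ k : Fin n, |K k l|) * g ω := by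
          rw [Finset.sum_mul]
          exact Finset.sum_congr rfl fun l _ => (Finset.sum_mul _ _ _).symm
      _ = C * g ω := by rw [hCdef, Finset.sum_comm]
  have hAKAptw : ∀ (K : Matrix (Fin n) (Fin n) ℝ), K.PosSemidef →
      ∀ ω, ((A 1 ω)ᵀ * K * A 1 ω).PosSemidef := by
    intro K hK ω
    have := hK.conjTranspose_mul_mul_same (A 1 ω)
    rwa [matrix_conjTranspose_real] at this
  have hintPK : ∀ (K : Matrix (Fin n) (Fin n) ℝ) (i j : Fin n ⊕ Fin m),
      Integrable (fun ω => (N 1 ω + (A 1 ω)ᵀ * K * A 1 ω) i j) μpr := fun K i j =>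
    (hNint i j).add (hAKAint K i j)
  have hPsplit : ∀ K : Matrix (Fin n) (Fin n) ℝ,
      matExp μpr (fun ω => N 1 ω + (A 1 ω)ᵀ * K * A 1 ω)
        = matExp μpr (N 1) + matExp μpr (fun ω => (A 1 ω)ᵀ * K * A 1 ω) := fun K =>
    matExp_add' μpr _ _ hNint (hAKAint K)
  have hPpsd : ∀ K : Matrix (Fin n) (Fin n) ℝ, K.PosSemidef →
      (matExp μpr (fun ω => N 1 ω + (A 1 ω)ᵀ * K * A 1 ω)).PosSemidef := fun K hK =>
    matExp_posSemidef μpr _ (hintPK K) (fun ω => (hNpsd 0 ω).add (hAKAptw K hK ω))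
  have hPB : ∀ K : Matrix (Fin n) (Fin n) ℝ, K.PosSemidef →
      (matExp μpr (fun ω => N 1 ω + (A 1 ω)ᵀ * K * A 1 ω)).toBlocks₂₂.PosDef := by
    intro K hK
    rw [hPsplit K]
    have h1 : (matExp μpr (N 1)).toBlocks₂₂.PosDef := posDef_toBlocks₂₂ hENpos
    have h2 : (matExp μpr (fun ω => (A 1 ω)ᵀ * K * A 1 ω)).toBlocks₂₂.PosSemidef :=
      (matExp_posSemidef μpr _ (hAKAint K) (hAKAptw K hK)).submatrix Sum.inr
    have h3 : (matExp μpr (N 1) + matExp μpr (fun ω => (A 1 ω)ᵀ * K * A 1 ω)).toBlocks₂₂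
        = (matExp μpr (N 1)).toBlocks₂₂
          + (matExp μpr (fun ω => (A 1 ω)ᵀ * K * A 1 ω)).toBlocks₂₂ := rfl
    rw [h3]
    exact h1.add_posSemidef h2
  have hPdiff : ∀ K K' : Matrix (Fin n) (Fin n) ℝ, (K' - K).PosSemidef →
      (matExp μpr (fun ω => N 1 ω + (A 1 ω)ᵀ * K' * A 1 ω)
        - matExp μpr (fun ω => N 1 ω + (A 1 ω)ᵀ * K * A 1 ω)).PosSemidef := by
    intro K K' hKK
    have hs : matExp μpr (fun ω => N 1 ω + (A 1 ω)ᵀ * K' * A 1 ω)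
        - matExp μpr (fun ω => N 1 ω + (A 1 ω)ᵀ * K * A 1 ω)
        = matExp μpr (fun ω => (A 1 ω)ᵀ * (K' - K) * A 1 ω) := by
      rw [hPsplit K, hPsplit K']
      have h4 : matExp μpr (fun ω => (A 1 ω)ᵀ * (K' - K) * A 1 ω)
          = matExp μpr (fun ω => (A 1 ω)ᵀ * K' * A 1 ω)
            - matExp μpr (fun ω => (A 1 ω)ᵀ * K * A 1 ω) := by
        rw [← matExp_sub' μpr _ _ (hAKAint K') (hAKAint K)]
        congr 1
        funext ω
        simp only [Matrix.sub_mul, Matrix.mul_sub]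
      rw [h4]; abel
    rw [hs]
    exact matExp_posSemidef μpr _ (hAKAint (K' - K)) (hAKAptw _ hKK)
  have main : ∀ t : ℕ, (Kseq μpr A N t).PosSemidef ∧ (Ktil - Kseq μpr A N t).PosSemidef := by
    intro t
    induction t with
    | zero =>
      refine ⟨?_, ?_⟩
      · show (0 : Matrix (Fin n) (Fin n) ℝ).PosSemidef
        exact Matrix.PosSemidef.zero
      · show (Ktil - 0).PosSemidef
        simpa using hKtil
    | succ t ih =>
      obtain ⟨hpsd, hle⟩ := ih
      have hsucc : Kseq μpr A N (t + 1)
          = piMap (matExp μpr (fun ω => N 1 ω + (A 1 ω)ᵀ * Kseq μpr A N t * A 1 ω)) := rfl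
      have hP := hPpsd _ hpsd
      have hP' := hPpsd _ hKtil
      have hB := hPB _ hpsd
      have hB' := hPB _ hKtil
      have hmono := piMap_mono hP.1 hP'.1 hB hB' (hPdiff _ _ hle)
      refine ⟨?_, ?_⟩
      · rw [hsucc, ← piMap_eq_Jm_gamma hP.1 hB]
        exact Jm_psd hP _
      · rw [hsucc, hsol]
        exact hmono
  intro t
  exact (main t).2


end
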